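/- Let (X, μ) be a measure space and r : X × ℝ → ℝ a function such that r(x,s) ≥ 0 for all (x,s), x ↦ r(x,s) is measurable for each s ∈ ℝ, x ↦ r(x,0) belongs to L²(μ), and there is L_r > 0 with |r(x,s₁) − r(x,s₂)| ≤ L_r|s₁ − s₂| for all x ∈ X and s₁, s₂ ∈ ℝ. For η, v ∈ L²(μ; ℝ) define j(η, v) = ∫_X r(x, |η(x)|) |v(x)| dμ(x). Then j(η, v) is finite for all η, v ∈ L²(μ; ℝ), and for all η₁, η₂, v₁, v₂ ∈ L²(μ; ℝ): j(η₁, v₂) − j(η₁, v₁) + j(η₂, v₁) − j(η₂, v₂) ≤ L_r ‖η₁ − η₂‖_{L²(μ)} ‖v₁ − v₂‖_{L²(μ)}. -/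

import Mathlib

open MeasureTheory

section Aux

variable {X : Type*} [MeasurableSpace X] {μ : Measure X}

lemma aux_integrable_mul_of_memL2 {f g : X → ℝ} (hf : MemLp f 2 μ) (hg : MemLp g 2 μ) :
    Integrable (fun x => f x * g x) μ := by
  have h := L2.integrable_inner (𝕜 := ℝ) (hf.toLp f) (hg.toLp g)
  refine h.congr ?_
  filter_upwards [hf.coeFn_toLp, hg.coeFn_toLp] with x hx hy
  simp [hx, hy, RCLike.inner_apply, mul_comm]

lemma aux_integral_mul_le_of_memL2 {f g : X → ℝ} (hf : MemLp f 2 μ) (hg : MemLp g 2 μ) :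
    ∫ x, f x * g x ∂μ ≤ (eLpNorm f 2 μ).toReal * (eLpNorm g 2 μ).toReal := by
  have h := real_inner_le_norm (hf.toLp f) (hg.toLp g)
  rw [L2.inner_def] at h
  have heq : ∫ a, (inner ℝ (hf.toLp f a) (hg.toLp g a) : ℝ) ∂μ = ∫ x, f x * g x ∂μ := by
    refine integral_congr_ae ?_
    filter_upwards [hf.coeFn_toLp, hg.coeFn_toLp] with x hx hy
    simp [hx, hy, RCLike.inner_apply, mul_comm]
  rw [heq, Lp.norm_toLp, Lp.norm_toLp] at h
  exact h

end Aux

theorem friction_functional_finite_and_four_term_estimate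
    {X : Type*} [MeasurableSpace X] (μ : Measure X)
    (r : X × ℝ → ℝ) (L_r : ℝ)
    (hr0 : ∀ x s, 0 ≤ r (x, s))
    (hrmeas : ∀ s : ℝ, Measurable fun x => r (x, s))
    (hr02 : MemLp (fun x => r (x, 0)) 2 μ)
    (hLr : 0 < L_r)
    (hrlip : ∀ x s₁ s₂, |r (x, s₁) - r (x, s₂)| ≤ L_r * |s₁ - s₂|) :
    (∀ η v : Lp ℝ 2 μ, Integrable (fun x => r (x, |η x|) * |v x|) μ) ∧
    ∀ η₁ η₂ v₁ v₂ : Lp ℝ 2 μ,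
      (∫ x, r (x, |η₁ x|) * |v₂ x| ∂μ) - (∫ x, r (x, |η₁ x|) * |v₁ x| ∂μ)
        + (∫ x, r (x, |η₂ x|) * |v₁ x| ∂μ) - (∫ x, r (x, |η₂ x|) * |v₂ x| ∂μ)
      ≤ L_r * ‖η₁ - η₂‖ * ‖v₁ - v₂‖ := by
  -- uncurried measurability
  have hcont : ∀ x, Continuous fun s => r (x, s) := by
    intro x
    refine (LipschitzWith.of_dist_le_mul (K := L_r.toNNReal) fun s₁ s₂ => ?_).continuous
    rw [Real.dist_eq, Real.dist_eq, Real.coe_toNNReal _ hLr.le]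
    exact hrlip x s₁ s₂
  have huncurry : Measurable (Function.uncurry fun s x => r (x, s)) :=
    measurable_uncurry_of_continuous_of_measurable (fun x => hcont x) hrmeas
  have hmeas_comp : ∀ η : Lp ℝ 2 μ, Measurable fun x => r (x, |η x|) := by
    intro η
    have hη : Measurable fun x => (η : X → ℝ) x := (Lp.stronglyMeasurable η).measurable
    exact huncurry.comp (hη.abs.prodMk measurable_id)
  -- membership in L²
  have hmem : ∀ η : Lp ℝ 2 μ, MemLp (fun x => r (x, |η x|)) 2 μ := by
    intro η
    have hbig : MemLp (fun x => |r (x, 0)| + L_r * |(η : X → ℝ) x|) 2 μ :=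
      hr02.abs.add (((Lp.memLp η).abs).const_mul L_r)
    refine MemLp.of_le hbig (hmeas_comp η).aestronglyMeasurable (ae_of_all _ fun x => ?_)
    have h1 : r (x, |η x|) - r (x, 0) ≤ L_r * |η x| := by
      have := (abs_le.mp (hrlip x (|η x|) 0)).2
      simpa using this
    have h2 : 0 ≤ L_r * |(η : X → ℝ) x| := by positivity
    rw [Real.norm_eq_abs, Real.norm_eq_abs, abs_of_nonneg (hr0 x _)]
    calc r (x, |η x|) ≤ r (x, 0) + L_r * |η x| := by linarith
    _ ≤ |r (x, 0)| + L_r * |η x| := by gcongr; exact le_abs_self _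
    _ ≤ |(|r (x, 0)| + L_r * |η x|)| := le_abs_self _
  have hint : ∀ η v : Lp ℝ 2 μ, Integrable (fun x => r (x, |η x|) * |v x|) μ :=
    fun η v => aux_integrable_mul_of_memL2 (hmem η) ((Lp.memLp v).abs)
  refine ⟨hint, fun η₁ η₂ v₁ v₂ => ?_⟩
  have key : (∫ x, r (x, |η₁ x|) * |v₂ x| ∂μ) - (∫ x, r (x, |η₁ x|) * |v₁ x| ∂μ)
        + (∫ x, r (x, |η₂ x|) * |v₁ x| ∂μ) - (∫ x, r (x, |η₂ x|) * |v₂ x| ∂μ)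
      = ∫ x, (r (x, |η₁ x|) - r (x, |η₂ x|)) * (|v₂ x| - |v₁ x|) ∂μ := by
    have h1 : ∫ x, (r (x, |η₁ x|) - r (x, |η₂ x|)) * (|v₂ x| - |v₁ x|) ∂μ
        = ∫ x, (r (x, |η₁ x|) * |v₂ x| - r (x, |η₁ x|) * |v₁ x|)
            + (r (x, |η₂ x|) * |v₁ x| - r (x, |η₂ x|) * |v₂ x|) ∂μ := by
      congr 1; funext x; ring
    have I1 : Integrable (fun x => r (x, |η₁ x|) * |v₂ x| - r (x, |η₁ x|) * |v₁ x|) μ :=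
      (hint η₁ v₂).sub (hint η₁ v₁)
    have I2 : Integrable (fun x => r (x, |η₂ x|) * |v₁ x| - r (x, |η₂ x|) * |v₂ x|) μ :=
      (hint η₂ v₁).sub (hint η₂ v₂)
    rw [h1, integral_add I1 I2,
        integral_sub (hint η₁ v₂) (hint η₁ v₁), integral_sub (hint η₂ v₁) (hint η₂ v₂)]
    ring
  rw [key]
  -- pointwise bound
  have hptwise : ∀ x, (r (x, |η₁ x|) - r (x, |η₂ x|)) * (|v₂ x| - |v₁ x|)
      ≤ L_r * (|η₁ x - η₂ x| * |v₁ x - v₂ x|) := by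
    intro x
    calc (r (x, |η₁ x|) - r (x, |η₂ x|)) * (|v₂ x| - |v₁ x|)
        ≤ |(r (x, |η₁ x|) - r (x, |η₂ x|)) * (|v₂ x| - |v₁ x|)| := le_abs_self _
      _ = |r (x, |η₁ x|) - r (x, |η₂ x|)| * |(|v₂ x| - |v₁ x|)| := abs_mul _ _
      _ ≤ (L_r * |η₁ x - η₂ x|) * |v₁ x - v₂ x| := by
          refine mul_le_mul ?_ ?_ (abs_nonneg _) (by positivity)
          · refine (hrlip x _ _).trans ?_
            have h := abs_abs_sub_abs_le_abs_sub (η₁ x) (η₂ x)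
            have : (|(|η₁ x| - |η₂ x|)|) ≤ |η₁ x - η₂ x| := h
            nlinarith [abs_nonneg (η₁ x - η₂ x)]
          · calc |(|v₂ x| - |v₁ x|)| ≤ |v₂ x - v₁ x| := abs_abs_sub_abs_le_abs_sub _ _
              _ = |v₁ x - v₂ x| := abs_sub_comm _ _
      _ = L_r * (|η₁ x - η₂ x| * |v₁ x - v₂ x|) := by ring
  -- integrability of the dominating function
  have hF : MemLp (fun x => |η₁ x - η₂ x|) 2 μ := (((Lp.memLp η₁).sub (Lp.memLp η₂))).abs
  have hG : MemLp (fun x => |v₁ x - v₂ x|) 2 μ := (((Lp.memLp v₁).sub (Lp.memLp v₂))).abs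
  have hdom : Integrable (fun x => L_r * (|η₁ x - η₂ x| * |v₁ x - v₂ x|)) μ :=
    (aux_integrable_mul_of_memL2 hF hG).const_mul L_r
  have hLHSint : Integrable (fun x => (r (x, |η₁ x|) - r (x, |η₂ x|)) * (|v₂ x| - |v₁ x|)) μ := by
    have : (fun x => (r (x, |η₁ x|) - r (x, |η₂ x|)) * (|v₂ x| - |v₁ x|))
        = fun x => (r (x, |η₁ x|) * |v₂ x| - r (x, |η₁ x|) * |v₁ x|)
          + (r (x, |η₂ x|) * |v₁ x| - r (x, |η₂ x|) * |v₂ x|) := by funext x; ring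
    rw [this]
    exact ((hint η₁ v₂).sub (hint η₁ v₁)).add ((hint η₂ v₁).sub (hint η₂ v₂))
  calc ∫ x, (r (x, |η₁ x|) - r (x, |η₂ x|)) * (|v₂ x| - |v₁ x|) ∂μ
      ≤ ∫ x, L_r * (|η₁ x - η₂ x| * |v₁ x - v₂ x|) ∂μ :=
        integral_mono hLHSint hdom hptwise
    _ = L_r * ∫ x, |η₁ x - η₂ x| * |v₁ x - v₂ x| ∂μ := integral_const_mul _ _
    _ ≤ L_r * ((eLpNorm (fun x => |η₁ x - η₂ x|) 2 μ).toReal * (eLpNorm (fun x => |v₁ x - v₂ x|) 2 μ).toReal) := by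
        gcongr
        exact aux_integral_mul_le_of_memL2 hF hG
    _ = L_r * ‖η₁ - η₂‖ * ‖v₁ - v₂‖ := by
        have h1 : eLpNorm (fun x => |η₁ x - η₂ x|) 2 μ = eLpNorm ((η₁ - η₂ : Lp ℝ 2 μ) : X → ℝ) 2 μ := by
          rw [← eLpNorm_norm ((η₁ - η₂ : Lp ℝ 2 μ) : X → ℝ)]
          refine eLpNorm_congr_ae ?_
          filter_upwards [Lp.coeFn_sub η₁ η₂] with x hx
          rw [Real.norm_eq_abs, hx]; simp
        have h2 : eLpNorm (fun x => |v₁ x - v₂ x|) 2 μ = eLpNorm ((v₁ - v₂ : Lp ℝ 2 μ) : X → ℝ) 2 μ := by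
          rw [← eLpNorm_norm ((v₁ - v₂ : Lp ℝ 2 μ) : X → ℝ)]
          refine eLpNorm_congr_ae ?_
          filter_upwards [Lp.coeFn_sub v₁ v₂] with x hx
          rw [Real.norm_eq_abs, hx]; simp
        rw [h1, h2, ← Lp.norm_def, ← Lp.norm_def]
        ring
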